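/- arXiv:2402.17273 — 3 statements merged into one kernel-verified Lean document; each statement's English description precedes it below -/
import Mathlib

section
/- (Jacobi–Anger expansion) For every z ∈ ℂ and every θ ∈ ℝ, e^{i z cos θ} = J_0(z) + Σ_{s ∈ ℤ, s ≠ 0} i^s J_s(z) e^{i s θ}, where the series on the right-hand side converges absolutely. -/
/-- Bessel function of the first kind of integer order `s`, defined by Bessel's integral. -/
noncomputable def besselJ (s : ℤ) (z : ℂ) : ℂ :=
  (1 / (2 * (Real.pi : ℂ))) *
    ∫ τ in (-Real.pi)..Real.pi,
      Complex.exp (Complex.I * (z * (Real.sin τ : ℂ) - (s : ℂ) * (τ : ℂ)))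

namespace JacobiAnger

open Complex MeasureTheory intervalIntegral Real

noncomputable def fJ (z : ℂ) (τ : ℝ) : ℂ := Complex.exp (Complex.I * z * (Real.sin τ : ℂ))
noncomputable def f1 (z : ℂ) (τ : ℝ) : ℂ := (Complex.I * z * (Real.cos τ : ℂ)) * fJ z τ
noncomputable def f2 (z : ℂ) (τ : ℝ) : ℂ :=
  ((Complex.I * z * (Real.cos τ : ℂ)) * (Complex.I * z * (Real.cos τ : ℂ))
     - Complex.I * z * (Real.sin τ : ℂ)) * fJ z τ

lemma hab : (-Real.pi) < Real.pi := by linarith [Real.pi_pos]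

instance factT : Fact (0 < Real.pi - -Real.pi) := ⟨by linarith [Real.pi_pos]⟩

lemma continuous_fJ (z : ℂ) : Continuous (fJ z) := by
  exact Complex.continuous_exp.comp (by continuity)

lemma continuous_f1 (z : ℂ) : Continuous (f1 z) := by
  exact ((continuous_const.mul (by continuity))).mul (continuous_fJ z)

lemma continuous_f2 (z : ℂ) : Continuous (f2 z) := by
  refine Continuous.mul ?_ (continuous_fJ z)
  continuity

lemma hasDerivAt_fJ (z : ℂ) (τ : ℝ) : HasDerivAt (fJ z) (f1 z τ) τ := by
  have h1 : HasDerivAt (fun t : ℝ => ((Real.sin t : ℝ) : ℂ)) ((Real.cos τ : ℂ)) τ :=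
    (Real.hasDerivAt_sin τ).ofReal_comp
  have h2 : HasDerivAt (fun t : ℝ => Complex.I * z * ((Real.sin t : ℝ) : ℂ))
      (Complex.I * z * (Real.cos τ : ℂ)) τ := h1.const_mul _
  have h3 := h2.cexp
  unfold fJ f1
  convert h3 using 1
  rw [mul_comm]
  rfl

lemma hasDerivAt_f1 (z : ℂ) (τ : ℝ) : HasDerivAt (f1 z) (f2 z τ) τ := by
  have h1 : HasDerivAt (fun t : ℝ => Complex.I * z * ((Real.cos t : ℝ) : ℂ))
      (Complex.I * z * (-Real.sin τ : ℂ)) τ :=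
    by simpa using ((Real.hasDerivAt_cos τ).ofReal_comp).const_mul (Complex.I * z)
  have := h1.mul (hasDerivAt_fJ z τ)
  convert this using 1
  · rfl
  case e'_8 => rfl
  simp [f2, f1, fJ]
  push_cast
  ring

lemma periodic_fJ (z : ℂ) : Function.Periodic (fJ z) (Real.pi - -Real.pi) := by
  intro x
  have : x + (Real.pi - -Real.pi) = x + 2 * Real.pi := by ring
  rw [this]
  unfold fJ
  rw [Real.sin_add_two_pi]

noncomputable def F (z : ℂ) : C(AddCircle (Real.pi - -Real.pi), ℂ) :=
  ⟨(periodic_fJ z).lift, (continuous_fJ z).quotient_liftOn' _⟩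

lemma F_coe (z : ℂ) (x : ℝ) : F z (x : AddCircle (Real.pi - -Real.pi)) = fJ z x :=
  (periodic_fJ z).lift_coe x


lemma coeff_eq (z : ℂ) (n : ℤ) : fourierCoeff ⇑(F z) n = besselJ n z := by
  rw [fourierCoeff_eq_intervalIntegral _ n (-Real.pi),
    show -Real.pi + (Real.pi - -Real.pi) = Real.pi by ring, besselJ, Complex.real_smul]
  have hπ : (Real.pi : ℂ) ≠ 0 := Complex.ofReal_ne_zero.mpr Real.pi_ne_zero
  have hT2 : ((Real.pi - -Real.pi : ℝ) : ℂ) = 2 * (Real.pi : ℂ) := by push_cast; ring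
  have hT : ((Real.pi - -Real.pi : ℝ) : ℂ) ≠ 0 := by
    rw [hT2]; exact mul_ne_zero two_ne_zero hπ
  congr 1
  · push_cast
    rw [div_eq_div_iff (by exact_mod_cast hT) (mul_ne_zero two_ne_zero hπ)]
    ring
  · refine intervalIntegral.integral_congr fun x hx => ?_
    rw [F_coe, smul_eq_mul, fourier_coe_apply, fJ, ← Complex.exp_add, hT2]
    congr 1
    push_cast
    field_simp
    ring


lemma coeffOn_eq (z : ℂ) (n : ℤ) : fourierCoeffOn hab (fJ z) n = fourierCoeff ⇑(F z) n := by
  rw [fourierCoeffOn_eq_integral, fourierCoeff_eq_intervalIntegral _ n (-Real.pi),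
    show -Real.pi + (Real.pi - -Real.pi) = Real.pi by ring]
  congr 1

noncomputable def M (z : ℂ) : ℝ :=
  (‖z‖ ^ 2 + ‖z‖) * Real.exp ‖z‖

lemma norm_fJ_le (z : ℂ) (τ : ℝ) : ‖fJ z τ‖ ≤ Real.exp ‖z‖ := by
  rw [fJ, Complex.norm_exp]
  apply Real.exp_le_exp.mpr
  calc (Complex.I * z * (Real.sin τ : ℂ)).re ≤ ‖Complex.I * z * (Real.sin τ : ℂ)‖ :=
        Complex.re_le_norm _
    _ = ‖z‖ * |Real.sin τ| := by
        rw [norm_mul, norm_mul, Complex.norm_I, one_mul, Complex.norm_real, Real.norm_eq_abs]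
    _ ≤ ‖z‖ * 1 := by
        gcongr
        exact Real.abs_sin_le_one τ
    _ = ‖z‖ := mul_one _

lemma norm_f2_le (z : ℂ) (τ : ℝ) : ‖f2 z τ‖ ≤ M z := by
  rw [f2, norm_mul, M]
  have h1 : ‖Complex.I * z * (Real.cos τ : ℂ)‖ ≤ ‖z‖ := by
    rw [norm_mul, norm_mul, Complex.norm_I, one_mul,
      Complex.norm_real, Real.norm_eq_abs]
    calc ‖z‖ * |Real.cos τ| ≤ ‖z‖ * 1 := by
          gcongr; exact Real.abs_cos_le_one τ
      _ = ‖z‖ := mul_one _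
  have h2 : ‖Complex.I * z * (Real.sin τ : ℂ)‖ ≤ ‖z‖ := by
    rw [norm_mul, norm_mul, Complex.norm_I, one_mul,
      Complex.norm_real, Real.norm_eq_abs]
    calc ‖z‖ * |Real.sin τ| ≤ ‖z‖ * 1 := by
          gcongr; exact Real.abs_sin_le_one τ
      _ = ‖z‖ := mul_one _
  have h3 : ‖Complex.I * z * (Real.cos τ : ℂ) * (Complex.I * z * (Real.cos τ : ℂ))
      - Complex.I * z * (Real.sin τ : ℂ)‖ ≤ ‖z‖ ^ 2 + ‖z‖ := by
    calc _ ≤ ‖Complex.I * z * (Real.cos τ : ℂ) * (Complex.I * z * (Real.cos τ : ℂ))‖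
          + ‖Complex.I * z * (Real.sin τ : ℂ)‖ := norm_sub_le _ _
      _ ≤ ‖z‖ ^ 2 + ‖z‖ := by
          rw [norm_mul, sq]
          exact add_le_add (mul_le_mul h1 h1 (norm_nonneg _) (norm_nonneg z)) h2
  calc _ ≤ (‖z‖ ^ 2 + ‖z‖) * Real.exp (‖z‖) := by
        apply mul_le_mul h3 (norm_fJ_le z τ) (norm_nonneg _)
        positivity
    _ = _ := rfl

lemma norm_coeffOn_f2_le (z : ℂ) (n : ℤ) : ‖fourierCoeffOn hab (f2 z) n‖ ≤ M z := by
  rw [fourierCoeffOn_eq_integral, norm_smul]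
  have hbig : ‖∫ x in (-Real.pi)..Real.pi,
      (fourier (-n) (x : AddCircle (Real.pi - -Real.pi)) : ℂ) • f2 z x‖
      ≤ M z * |Real.pi - -Real.pi| := by
    apply intervalIntegral.norm_integral_le_of_norm_le_const
    intro x hx
    rw [norm_smul]
    have h1 : ‖(fourier (-n) (x : AddCircle (Real.pi - -Real.pi)) : ℂ)‖ = 1 := Circle.norm_coe _
    rw [h1, one_mul]
    exact norm_f2_le z x
  have hpos : (0:ℝ) < Real.pi - -Real.pi := factT.out
  have h2 : ‖(1 / (Real.pi - -Real.pi) : ℝ)‖ = 1 / (Real.pi - -Real.pi) := by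
    rw [Real.norm_eq_abs, abs_of_pos (by positivity)]
  rw [h2]
  calc 1 / (Real.pi - -Real.pi) * ‖_‖ ≤ 1 / (Real.pi - -Real.pi) * (M z * |Real.pi - -Real.pi|) := by
        gcongr
    _ = M z := by
        rw [abs_of_pos hpos]
        field_simp

lemma coeffOn_rec (z : ℂ) {g g' : ℝ → ℂ} (hder : ∀ τ, HasDerivAt g (g' τ) τ)
    (hcont : Continuous g') (hgp : g Real.pi = g (-Real.pi)) {n : ℤ} (hn : n ≠ 0) :
    fourierCoeffOn hab g n = 1 / (Complex.I * n) * fourierCoeffOn hab g' n := by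
  rw [fourierCoeffOn_of_hasDerivAt hab hn (fun x _ => hder x)
    (hcont.intervalIntegrable _ _), hgp, sub_self, mul_zero, zero_sub]
  have hπ : (Real.pi : ℂ) ≠ 0 := Complex.ofReal_ne_zero.mpr Real.pi_ne_zero
  have hn' : (n : ℂ) ≠ 0 := Int.cast_ne_zero.mpr hn
  push_cast
  field_simp
  ring


lemma fJ_per (z : ℂ) : fJ z Real.pi = fJ z (-Real.pi) := by
  unfold fJ
  rw [Real.sin_pi, Real.sin_neg, Real.sin_pi, neg_zero]

lemma f1_per (z : ℂ) : f1 z Real.pi = f1 z (-Real.pi) := by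
  unfold f1
  rw [fJ_per, Real.cos_neg]

lemma norm_coeff_le (z : ℂ) {n : ℤ} (hn : n ≠ 0) :
    ‖fourierCoeff ⇑(F z) n‖ ≤ M z * (1 / (n : ℝ) ^ (2:ℕ)) := by
  rw [← coeffOn_eq,
    coeffOn_rec z (hasDerivAt_fJ z) (continuous_f1 z) (fJ_per z) hn,
    coeffOn_rec z (hasDerivAt_f1 z) (continuous_f2 z) (f1_per z) hn]
  have h1 : ‖(1 / (Complex.I * (n:ℂ)) : ℂ)‖ = 1 / |(n:ℝ)| := by
    rw [norm_div, norm_one, norm_mul, Complex.norm_I, one_mul,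
      Complex.norm_intCast]
  have h2 : (1 / |(n:ℝ)|) * (1 / |(n:ℝ)|) = 1 / (n:ℝ) ^ (2:ℕ) := by
    rw [div_mul_div_comm, one_mul, ← abs_mul, ← sq, abs_sq]
  calc ‖(1 / (Complex.I * (n:ℂ)) : ℂ) * ((1 / (Complex.I * (n:ℂ)) : ℂ)
        * fourierCoeffOn hab (f2 z) n)‖
      = 1 / |(n:ℝ)| * (1 / |(n:ℝ)| * ‖fourierCoeffOn hab (f2 z) n‖) := by
        rw [norm_mul, norm_mul, h1]
    _ = ‖fourierCoeffOn hab (f2 z) n‖ * (1 / (n:ℝ) ^ (2:ℕ)) := by rw [← h2]; ring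
    _ ≤ M z * (1 / (n:ℝ) ^ (2:ℕ)) := by
        apply mul_le_mul_of_nonneg_right (norm_coeffOn_f2_le z n) (by positivity)

lemma summable_norm_coeff (z : ℂ) :
    Summable (fun n : ℤ => ‖fourierCoeff ⇑(F z) n‖) := by
  apply Summable.of_norm_bounded_eventually (g := fun n : ℤ => M z * (1 / (n:ℝ) ^ (2:ℕ)))
  · exact (summable_one_div_int_pow.mpr one_lt_two).mul_left _
  · rw [Filter.eventually_cofinite]
    apply Set.Finite.subset (Set.finite_singleton 0)
    intro n hn
    simp only [Set.mem_setOf_eq] at hn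
    rcases eq_or_ne n 0 with h | h
    · simpa using h
    · exact absurd (by rw [norm_norm]; exact norm_coeff_le z h) hn

lemma I_zpow (n : ℤ) : Complex.I ^ n = Complex.exp ((n : ℂ) * ((Real.pi : ℂ) / 2 * Complex.I)) := by
  rw [Complex.exp_int_mul]
  congr 1
  rw [Complex.exp_mul_I, Complex.cos_pi_div_two, Complex.sin_pi_div_two, one_mul, zero_add]

lemma fourier_eval (n : ℤ) (θ : ℝ) :
    (fourier n ((θ + Real.pi / 2 : ℝ) : AddCircle (Real.pi - -Real.pi)) : ℂ)
      = Complex.I ^ n * Complex.exp (Complex.I * (n : ℂ) * (θ : ℂ)) := by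
  rw [fourier_coe_apply, I_zpow, ← Complex.exp_add,
    show ((Real.pi - -Real.pi : ℝ) : ℂ) = 2 * (Real.pi : ℂ) by push_cast; ring]
  congr 1
  have hπ : (Real.pi : ℂ) ≠ 0 := Complex.ofReal_ne_zero.mpr Real.pi_ne_zero
  push_cast
  field_simp
  ring

end JacobiAnger


open JacobiAnger in
/-- Jacobi–Anger expansion:
`e^{i z cos θ} = J_0(z) + Σ_{s ≠ 0} i^s J_s(z) e^{i s θ}`, the series converging absolutely. -/
theorem stmt1 (z : ℂ) (θ : ℝ) :
    (Complex.exp (Complex.I * z * (Real.cos θ : ℂ)) =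
      besselJ 0 z + ∑' s : {s : ℤ // s ≠ 0},
        Complex.I ^ (s : ℤ) * besselJ s z *
          Complex.exp (Complex.I * ((s : ℤ) : ℂ) * (θ : ℂ))) ∧
    Summable (fun s : {s : ℤ // s ≠ 0} =>
      ‖Complex.I ^ (s : ℤ) * besselJ s z *
        Complex.exp (Complex.I * ((s : ℤ) : ℂ) * (θ : ℂ))‖) := by
  set g : ℤ → ℂ := fun n => Complex.I ^ n * besselJ n z
      * Complex.exp (Complex.I * (n : ℂ) * (θ : ℂ)) with hgdef
  have hnormg : ∀ n : ℤ, ‖g n‖ = ‖fourierCoeff ⇑(F z) n‖ := by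
    intro n
    rw [coeff_eq, hgdef]
    simp only [norm_mul, norm_zpow, Complex.norm_I, one_zpow,
      Complex.norm_exp, one_mul]
    have : (Complex.I * (n : ℂ) * (θ : ℂ)).re = 0 := by
      simp [Complex.mul_re, Complex.mul_im]
    rw [this, Real.exp_zero, mul_one]
  have hsummn : Summable (fun n : ℤ => ‖g n‖) :=
    (summable_norm_coeff z).congr fun n => (hnormg n).symm
  have hsum0 : Summable (fourierCoeff ⇑(F z)) :=
    ((summable_norm_coeff z)).of_norm
  have hps := has_pointwise_sum_fourier_series_of_summable hsum0
      ((θ + Real.pi / 2 : ℝ) : AddCircle (Real.pi - -Real.pi))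
  have hval : (F z) ((θ + Real.pi / 2 : ℝ) : AddCircle (Real.pi - -Real.pi))
      = Complex.exp (Complex.I * z * (Real.cos θ : ℂ)) := by
    rw [F_coe, fJ, Real.sin_add_pi_div_two]
  have hfun : (fun n : ℤ => fourierCoeff ⇑(F z) n
      • (fourier n ((θ + Real.pi / 2 : ℝ) : AddCircle (Real.pi - -Real.pi)) : ℂ)) = g := by
    funext n
    rw [smul_eq_mul, coeff_eq, fourier_eval, hgdef]
    ring
  rw [hfun, hval] at hps
  have hgsummable : Summable g := hps.summable
  constructor
  · rw [← hps.tsum_eq,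
      ← Summable.tsum_add_tsum_compl (s := ({0} : Set ℤ))
        (hgsummable.comp_injective Subtype.coe_injective)
        (hgsummable.comp_injective Subtype.coe_injective),
      tsum_singleton 0 g]
    have hg0 : g 0 = besselJ 0 z := by
      rw [hgdef]
      simp
    rw [hg0]
    congr 1
  · refine (hsummn.comp_injective (Subtype.coe_injective)).congr fun s => ?_
    rw [Function.comp_apply]
end

section
/- (Pointwise kernel identity underlying Theorem 3.1) Let N ≥ 1, let θ_1, …, θ_N ∈ ℝ, and set a_n = (cos θ_n, sin θ_n) ∈ ℝ². Let k ∈ ℂ and let r, r' ∈ ℝ² with r ≠ r', write ρ = |r − r'| and r − r' = ρ (cos φ, sin φ) for some φ ∈ ℝ. Then (1/N) Σ_{p=1}^{N} Σ_{q=1, q ≠ p}^{N} e^{i k (a_p + a_q) · (r − r')} = N ( J_0(k ρ) + (1/N) Σ_{n=1}^{N} E(θ_n, φ, k ρ) )² − ( J_0(2 k ρ) + (1/N) Σ_{n=1}^{N} E(θ_n, φ, 2 k ρ) ). -/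
open scoped RealInnerProductSpace

namespace Stmt4Aux
open Complex Real intervalIntegral

noncomputable def g (z : ℂ) (τ : ℝ) : ℂ := Complex.exp (Complex.I * z * (Real.sin τ : ℂ))

noncomputable def g1 (z : ℂ) (τ : ℝ) : ℂ := Complex.I * z * (Real.cos τ : ℂ) * g z τ

noncomputable def g2 (z : ℂ) (τ : ℝ) : ℂ :=
  Complex.I * z * (-(Real.sin τ : ℂ)) * g z τ + Complex.I * z * (Real.cos τ : ℂ) * g1 z τ

lemma g_per (z : ℂ) : Function.Periodic (g z) (2 * Real.pi) := fun τ => by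
  simp [g, Real.sin_add_two_pi]

lemma hasDerivAt_g (z : ℂ) (τ : ℝ) : HasDerivAt (g z) (g1 z τ) τ := by
  have h1 : HasDerivAt (fun τ : ℝ => ((Real.sin τ : ℝ) : ℂ)) ((Real.cos τ : ℂ)) τ :=
    (Real.hasDerivAt_sin τ).ofReal_comp
  have h2 := h1.const_mul (Complex.I * z)
  have h3 := h2.cexp
  have h4 : HasDerivAt (g z)
      (Complex.exp (Complex.I * z * (Real.sin τ : ℂ)) * (Complex.I * z * (Real.cos τ : ℂ))) τ := h3
  have h5 : g1 z τ = Complex.exp (Complex.I * z * (Real.sin τ : ℂ)) * (Complex.I * z * (Real.cos τ : ℂ)) := by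
    rw [g1, g]; ring
  rw [h5]; exact h4

lemma hasDerivAt_g1 (z : ℂ) (τ : ℝ) : HasDerivAt (g1 z) (g2 z τ) τ := by
  have h1 : HasDerivAt (fun τ : ℝ => ((Real.cos τ : ℝ) : ℂ)) ((-(Real.sin τ) : ℝ) : ℂ) τ :=
    (Real.hasDerivAt_cos τ).ofReal_comp
  have h2 := h1.const_mul (Complex.I * z)
  have h3 := h2.mul (hasDerivAt_g z τ)
  have h4 : Complex.I * z * ((-Real.sin τ : ℝ) : ℂ) = Complex.I * z * (-(Real.sin τ : ℂ)) := by
    push_cast; ring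
  rw [h4] at h3
  exact h3

lemma g_cont (z : ℂ) : Continuous (g z) := by
  unfold g; fun_prop

lemma g1_cont (z : ℂ) : Continuous (g1 z) := by
  unfold g1 g; fun_prop

lemma g2_cont (z : ℂ) : Continuous (g2 z) := by
  unfold g2 g1 g; fun_prop

lemma g_norm (z : ℂ) (τ : ℝ) : ‖g z τ‖ ≤ Real.exp ‖z‖ := by
  rw [g, Complex.norm_exp]
  apply Real.exp_le_exp.mpr
  have : (Complex.I * z * (Real.sin τ : ℂ)).re = -z.im * Real.sin τ := by
    simp only [Complex.mul_re, Complex.mul_im, Complex.I_re, Complex.I_im,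
      Complex.ofReal_re, Complex.ofReal_im]
    ring
  rw [this]
  calc -z.im * Real.sin τ ≤ |(-z.im) * Real.sin τ| := le_abs_self _
    _ = |z.im| * |Real.sin τ| := by rw [abs_mul, abs_neg]
    _ ≤ ‖z‖ * 1 := by
        apply mul_le_mul (Complex.abs_im_le_norm z) (Real.abs_sin_le_one τ) (abs_nonneg _)
        exact norm_nonneg _
    _ = ‖z‖ := mul_one _

lemma g2_norm (z : ℂ) (τ : ℝ) : ‖g2 z τ‖ ≤ (‖z‖ + ‖z‖ ^ 2) * Real.exp ‖z‖ := by
  have hg := g_norm z τ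
  have hge : (0:ℝ) ≤ Real.exp ‖z‖ := (Real.exp_pos _).le
  have h1 : ‖Complex.I * z * (-(Real.sin τ : ℂ)) * g z τ‖ ≤ ‖z‖ * Real.exp ‖z‖ := by
    rw [norm_mul]
    have : ‖Complex.I * z * (-(Real.sin τ : ℂ))‖ ≤ ‖z‖ := by
      simp only [norm_mul, Complex.norm_I, one_mul, norm_neg, Complex.norm_real]
      calc ‖z‖ * ‖Real.sin τ‖ ≤ ‖z‖ * 1 := by
            apply mul_le_mul_of_nonneg_left _ (norm_nonneg z)
            rw [Real.norm_eq_abs]; exact Real.abs_sin_le_one τ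
        _ = ‖z‖ := mul_one _
    exact mul_le_mul this hg (norm_nonneg _) (norm_nonneg _)
  have h2 : ‖Complex.I * z * (Real.cos τ : ℂ) * g1 z τ‖ ≤ ‖z‖ ^ 2 * Real.exp ‖z‖ := by
    have hg1 : ‖g1 z τ‖ ≤ ‖z‖ * Real.exp ‖z‖ := by
      rw [g1, norm_mul]
      have : ‖Complex.I * z * (Real.cos τ : ℂ)‖ ≤ ‖z‖ := by
        simp only [norm_mul, Complex.norm_I, one_mul, Complex.norm_real]
        calc ‖z‖ * ‖Real.cos τ‖ ≤ ‖z‖ * 1 := by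
              apply mul_le_mul_of_nonneg_left _ (norm_nonneg z)
              rw [Real.norm_eq_abs]; exact Real.abs_cos_le_one τ
          _ = ‖z‖ := mul_one _
      exact mul_le_mul this hg (norm_nonneg _) (norm_nonneg _)
    rw [norm_mul]
    have h3 : ‖Complex.I * z * (Real.cos τ : ℂ)‖ ≤ ‖z‖ := by
      simp only [norm_mul, Complex.norm_I, one_mul, Complex.norm_real]
      calc ‖z‖ * ‖Real.cos τ‖ ≤ ‖z‖ * 1 := by
            apply mul_le_mul_of_nonneg_left _ (norm_nonneg z)
            rw [Real.norm_eq_abs]; exact Real.abs_cos_le_one τ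
        _ = ‖z‖ := mul_one _
    calc ‖Complex.I * z * (Real.cos τ : ℂ)‖ * ‖g1 z τ‖
        ≤ ‖z‖ * (‖z‖ * Real.exp ‖z‖) :=
          mul_le_mul h3 hg1 (norm_nonneg _) (norm_nonneg _)
      _ = ‖z‖ ^ 2 * Real.exp ‖z‖ := by ring
  calc ‖g2 z τ‖ ≤ ‖Complex.I * z * (-(Real.sin τ : ℂ)) * g z τ‖ +
        ‖Complex.I * z * (Real.cos τ : ℂ) * g1 z τ‖ := norm_add_le _ _
    _ ≤ ‖z‖ * Real.exp ‖z‖ + ‖z‖ ^ 2 * Real.exp ‖z‖ := add_le_add h1 h2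
    _ = (‖z‖ + ‖z‖ ^ 2) * Real.exp ‖z‖ := by ring


lemma ibp (s : ℤ) {h h' : ℝ → ℂ} (hd : ∀ τ, HasDerivAt h (h' τ) τ)
    (hch : Continuous h) (hch' : Continuous h') (hper : h (-Real.pi) = h Real.pi) :
    (∫ τ in (-Real.pi)..Real.pi, Complex.exp (-(Complex.I * s * τ)) * h' τ)
      = (Complex.I * s) * ∫ τ in (-Real.pi)..Real.pi, Complex.exp (-(Complex.I * s * τ)) * h τ := by
  set c : ℂ := -(Complex.I * s) with hc
  set u : ℝ → ℂ := fun τ => Complex.exp (c * τ) with hu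
  have hcu : Continuous u := by fun_prop
  have hud : ∀ τ : ℝ, HasDerivAt u (c * u τ) τ := by
    intro τ
    have h1 : HasDerivAt (fun τ : ℝ => ((τ : ℝ) : ℂ)) 1 τ := (hasDerivAt_id τ).ofReal_comp
    have h2 := (h1.const_mul c).cexp
    simpa [hu, mul_comm] using h2
  have hP : ∀ τ : ℝ, HasDerivAt (fun τ => u τ * h τ) (c * u τ * h τ + u τ * h' τ) τ := by
    intro τ
    exact (hud τ).mul (hd τ)
  have hint : (∫ τ in (-Real.pi)..Real.pi, (c * u τ * h τ + u τ * h' τ))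
      = u Real.pi * h Real.pi - u (-Real.pi) * h (-Real.pi) := by
    apply intervalIntegral.integral_eq_sub_of_hasDerivAt (fun x _ => hP x)
    exact (Continuous.intervalIntegrable (by fun_prop) _ _)
  have hub : u Real.pi = u (-Real.pi) := by
    have : c * (Real.pi : ℂ) = c * ((-Real.pi : ℝ) : ℂ) + ((-s : ℤ) : ℂ) * (2 * Real.pi * Complex.I) := by
      push_cast [hc]; ring
    rw [hu]
    simp only []
    rw [this, Complex.exp_add, Complex.exp_int_mul_two_pi_mul_I, mul_one]
  have hzero : (∫ τ in (-Real.pi)..Real.pi, (c * u τ * h τ + u τ * h' τ)) = 0 := by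
    rw [hint, hub, hper]; ring
  have hsplit : (∫ τ in (-Real.pi)..Real.pi, (c * u τ * h τ + u τ * h' τ))
      = c * (∫ τ in (-Real.pi)..Real.pi, u τ * h τ) + ∫ τ in (-Real.pi)..Real.pi, u τ * h' τ := by
    have e : ∀ τ : ℝ, c * u τ * h τ + u τ * h' τ = c * (u τ * h τ) + u τ * h' τ :=
      fun τ => by ring
    simp_rw [e]
    rw [intervalIntegral.integral_add (f := fun τ => c * (u τ * h τ)) (g := fun τ => u τ * h' τ)
      ((Continuous.intervalIntegrable (by fun_prop) _ _))
      ((hcu.mul hch').intervalIntegrable _ _), intervalIntegral.integral_const_mul]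
  have hexp : ∀ τ : ℝ, Complex.exp (-(Complex.I * s * τ)) = u τ := by
    intro τ; simp only [hu, hc]; congr 1; ring
  simp only [hexp]
  have := hzero.symm.trans hsplit
  have h9 : (∫ τ in (-Real.pi)..Real.pi, u τ * h' τ)
      = -c * ∫ τ in (-Real.pi)..Real.pi, u τ * h τ := by linear_combination -this
  rw [h9, hc]; ring

lemma besselJ_eq (sv : ℤ) (z : ℂ) :
    besselJ sv z = (1 / (2 * (Real.pi : ℂ))) *
      ∫ τ in (-Real.pi)..Real.pi, Complex.exp (-(Complex.I * sv * τ)) * g z τ := by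
  rw [besselJ]
  congr 1
  apply intervalIntegral.integral_congr
  intro τ _
  simp only [g]
  rw [← Complex.exp_add]
  congr 1
  push_cast
  ring

lemma besselJ_bound (z : ℂ) (sv : ℤ) (hs : sv ≠ 0) :
    ‖besselJ sv z‖ ≤ ((‖z‖ + ‖z‖ ^ 2) * Real.exp ‖z‖) / (sv : ℝ) ^ 2 := by
  have hA1 : (∫ τ in (-Real.pi)..Real.pi, Complex.exp (-(Complex.I * sv * τ)) * g1 z τ)
      = (Complex.I * sv) * ∫ τ in (-Real.pi)..Real.pi, Complex.exp (-(Complex.I * sv * τ)) * g z τ :=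
    ibp sv (hasDerivAt_g z) (g_cont z) (g1_cont z) (by simp [g])
  have hA2 : (∫ τ in (-Real.pi)..Real.pi, Complex.exp (-(Complex.I * sv * τ)) * g2 z τ)
      = (Complex.I * sv) * ∫ τ in (-Real.pi)..Real.pi, Complex.exp (-(Complex.I * sv * τ)) * g1 z τ :=
    ibp sv (hasDerivAt_g1 z) (g1_cont z) (g2_cont z) (by simp [g1, g])
  set A := ∫ τ in (-Real.pi)..Real.pi, Complex.exp (-(Complex.I * sv * τ)) * g z τ with hA
  have key : (∫ τ in (-Real.pi)..Real.pi, Complex.exp (-(Complex.I * sv * τ)) * g2 z τ)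
      = -((sv : ℂ) ^ 2) * A := by
    rw [hA2, hA1]; ring_nf; rw [Complex.I_sq]; ring
  have hM : ‖∫ τ in (-Real.pi)..Real.pi, Complex.exp (-(Complex.I * sv * τ)) * g2 z τ‖
      ≤ ((‖z‖ + ‖z‖ ^ 2) * Real.exp ‖z‖) * (2 * Real.pi) := by
    have hb : ∀ x ∈ Set.uIoc (-Real.pi) Real.pi,
        ‖Complex.exp (-(Complex.I * sv * x)) * g2 z x‖ ≤ (‖z‖ + ‖z‖ ^ 2) * Real.exp ‖z‖ := by
      intro x _
      rw [norm_mul]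
      have hu1 : ‖Complex.exp (-(Complex.I * sv * x))‖ = 1 := by
        rw [Complex.norm_exp]
        have : (-(Complex.I * sv * x)).re = 0 := by
          simp [Complex.mul_re, Complex.mul_im]
        rw [this, Real.exp_zero]
      rw [hu1, one_mul]
      exact g2_norm z x
    have := intervalIntegral.norm_integral_le_of_norm_le_const hb
    calc ‖∫ τ in (-Real.pi)..Real.pi, Complex.exp (-(Complex.I * sv * τ)) * g2 z τ‖
        ≤ (‖z‖ + ‖z‖ ^ 2) * Real.exp ‖z‖ * |Real.pi - -Real.pi| := this
      _ = ((‖z‖ + ‖z‖ ^ 2) * Real.exp ‖z‖) * (2 * Real.pi) := by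
          rw [_root_.abs_of_nonneg (by linarith [Real.pi_pos] : (0:ℝ) ≤ Real.pi - -Real.pi)]; ring
  have hAnorm : ‖A‖ ≤ ((‖z‖ + ‖z‖ ^ 2) * Real.exp ‖z‖) * (2 * Real.pi) / (sv : ℝ) ^ 2 := by
    have hsv0 : (sv : ℝ) ≠ 0 := Int.cast_ne_zero.mpr hs
    have hsv : ((sv : ℝ) ^ 2 : ℝ) > 0 := lt_of_le_of_ne (sq_nonneg _) (Ne.symm (pow_ne_zero 2 hsv0))
    rw [le_div_iff₀ hsv]
    have hnn : ‖-((sv : ℂ) ^ 2) * A‖ = (sv : ℝ) ^ 2 * ‖A‖ := by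
      rw [norm_mul, norm_neg, norm_pow]
      congr 1
      rw [show ((sv : ℂ)) = (((sv : ℝ) : ℝ) : ℂ) by push_cast; ring, Complex.norm_real,
        Real.norm_eq_abs, _root_.sq_abs]
    rw [mul_comm, ← hnn, ← key]
    exact hM
  rw [besselJ_eq, norm_mul]
  have h2pi : ‖(1 / (2 * (Real.pi : ℂ)))‖ = 1 / (2 * Real.pi) := by
    rw [norm_div, norm_one, norm_mul]
    simp [Complex.norm_real, _root_.abs_of_nonneg Real.pi_nonneg]
  rw [h2pi, ← hA]
  calc 1 / (2 * Real.pi) * ‖A‖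
      ≤ 1 / (2 * Real.pi) * (((‖z‖ + ‖z‖ ^ 2) * Real.exp ‖z‖) * (2 * Real.pi) / (sv : ℝ) ^ 2) := by
        apply mul_le_mul_of_nonneg_left hAnorm
        positivity
    _ = ((‖z‖ + ‖z‖ ^ 2) * Real.exp ‖z‖) / (sv : ℝ) ^ 2 := by
        field_simp


lemma lift_continuous (z : ℂ) : Continuous ((g_per z).lift) := by
  rw [(QuotientAddGroup.isQuotientMap_mk (AddSubgroup.zmultiples (2 * Real.pi))).continuous_iff]
  exact (g_cont z).congr fun x => ((g_per z).lift_coe x).symm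

lemma summable_norm_besselJ (z : ℂ) : Summable (fun s : ℤ => ‖besselJ s z‖) := by
  apply Summable.of_norm_bounded_eventually
    (g := fun s : ℤ => ((‖z‖ + ‖z‖ ^ 2) * Real.exp ‖z‖) * (1 / (s : ℝ) ^ 2))
  · exact (summable_one_div_int_pow.mpr one_lt_two).mul_left _
  · filter_upwards [Filter.eventually_cofinite_ne (0 : ℤ)] with s hs
    rw [Real.norm_eq_abs, _root_.abs_of_nonneg (norm_nonneg _)]
    calc ‖besselJ s z‖ ≤ ((‖z‖ + ‖z‖ ^ 2) * Real.exp ‖z‖) / (s : ℝ) ^ 2 := besselJ_bound z s hs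
      _ = ((‖z‖ + ‖z‖ ^ 2) * Real.exp ‖z‖) * (1 / (s : ℝ) ^ 2) := by ring

lemma fourierCoeff_lift (z : ℂ) (sv : ℤ) :
    haveI : Fact (0 < 2 * Real.pi) := ⟨by positivity⟩
    fourierCoeff ((g_per z).lift) sv = besselJ sv z := by
  haveI : Fact (0 < 2 * Real.pi) := ⟨by positivity⟩
  have hπ : (Real.pi : ℂ) ≠ 0 := Complex.ofReal_ne_zero.mpr Real.pi_ne_zero
  rw [fourierCoeff_eq_intervalIntegral _ sv (-Real.pi), besselJ_eq]
  rw [show -Real.pi + 2 * Real.pi = Real.pi by ring]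
  have hcong : (∫ x in (-Real.pi)..Real.pi,
        (fourier (-sv) (x : AddCircle (2 * Real.pi))) • ((g_per z).lift (x : AddCircle (2 * Real.pi))))
      = ∫ τ in (-Real.pi)..Real.pi, Complex.exp (-(Complex.I * sv * τ)) * g z τ := by
    apply intervalIntegral.integral_congr
    intro x _
    show (fourier (-sv) (x : AddCircle (2 * Real.pi)) : ℂ) • ((g_per z).lift (x : AddCircle (2 * Real.pi)))
      = Complex.exp (-(Complex.I * sv * x)) * g z x
    rw [fourier_coe_apply, Function.Periodic.lift_coe, smul_eq_mul]
    congr 1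
    congr 1
    push_cast
    field_simp
  rw [hcong, Complex.real_smul]
  congr 1
  push_cast
  ring

lemma jacobi (z : ℂ) (α : ℝ) :
    HasSum (fun s : ℤ => besselJ s z * Complex.exp (Complex.I * s * α))
      (Complex.exp (Complex.I * z * (Real.sin α : ℂ))) := by
  haveI : Fact (0 < 2 * Real.pi) := ⟨by positivity⟩
  have hπ : (Real.pi : ℂ) ≠ 0 := Complex.ofReal_ne_zero.mpr Real.pi_ne_zero
  set F : C(AddCircle (2 * Real.pi), ℂ) := ⟨(g_per z).lift, lift_continuous z⟩ with hF
  have hcoeff : ∀ sv : ℤ, fourierCoeff (⇑F) sv = besselJ sv z := fun sv => fourierCoeff_lift z sv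
  have hsum : Summable (fourierCoeff (⇑F)) := by
    apply Summable.of_norm
    simp only [hcoeff]
    exact summable_norm_besselJ z
  have h := has_pointwise_sum_fourier_series_of_summable hsum (α : AddCircle (2 * Real.pi))
  have hterm : (fun i : ℤ => fourierCoeff (⇑F) i • (fourier i (α : AddCircle (2 * Real.pi)) : ℂ))
      = fun s : ℤ => besselJ s z * Complex.exp (Complex.I * s * α) := by
    funext s
    rw [hcoeff, smul_eq_mul, fourier_coe_apply]
    congr 1
    congr 1
    push_cast
    field_simp
  have hFα : (F (α : AddCircle (2 * Real.pi)) : ℂ)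
      = Complex.exp (Complex.I * z * (Real.sin α : ℂ)) := by
    show (g_per z).lift (α : AddCircle (2 * Real.pi)) = _
    rw [Function.Periodic.lift_coe]
    rfl
  rw [← hterm, ← hFα]
  exact h


end Stmt4Aux

/-- The error series `E(θ, φ, z) = Σ_{s ∈ ℤ, s ≠ 0} i^s J_s(z) e^{i s (θ − φ)}`. -/
noncomputable def errE (θ φ : ℝ) (z : ℂ) : ℂ :=
  ∑' s : {s : ℤ // s ≠ 0},
    Complex.I ^ (s : ℤ) * besselJ s z *
      Complex.exp (Complex.I * ((s : ℤ) : ℂ) * ((θ : ℂ) - (φ : ℂ)))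

namespace Stmt4Aux

set_option maxHeartbeats 1000000 in
lemma key (θ φ : ℝ) (z : ℂ) :
    besselJ 0 z + errE θ φ z
      = Complex.exp (Complex.I * z * (Real.cos (θ - φ) : ℂ)) := by
  have h := jacobi z (θ - φ + Real.pi / 2)
  set f : ℤ → ℂ := fun s =>
    Complex.I ^ (s : ℤ) * besselJ s z *
      Complex.exp (Complex.I * ((s : ℤ) : ℂ) * ((θ : ℂ) - (φ : ℂ))) with hf
  have hI2 : Complex.exp (((Real.pi / 2 : ℝ) : ℂ) * Complex.I) = Complex.I := by
    rw [Complex.exp_mul_I, ← Complex.ofReal_cos, ← Complex.ofReal_sin,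
      Real.cos_pi_div_two, Real.sin_pi_div_two]
    simp
  have hterm : ∀ s : ℤ,
      besselJ s z * Complex.exp (Complex.I * s * ((θ - φ + Real.pi / 2 : ℝ) : ℂ)) = f s := by
    intro s
    have hsplit : Complex.I * s * ((θ - φ + Real.pi / 2 : ℝ) : ℂ)
        = Complex.I * ((s : ℤ) : ℂ) * ((θ : ℂ) - (φ : ℂ))
          + (s : ℂ) * (((Real.pi / 2 : ℝ) : ℂ) * Complex.I) := by
      push_cast; ring
    rw [hsplit, Complex.exp_add, Complex.exp_int_mul, hI2, hf]
    ring
  have hval : Real.sin (θ - φ + Real.pi / 2) = Real.cos (θ - φ) :=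
    Real.sin_add_pi_div_two (θ - φ)
  rw [hval] at h
  have h' : HasSum f (Complex.exp (Complex.I * z * (Real.cos (θ - φ) : ℂ))) := by
    rwa [funext hterm] at h
  have h0 : f 0 = besselJ 0 z := by simp [hf]
  have hsub : HasSum (fun x : {x : ℤ // x ∉ ({0} : Finset ℤ)} => f (x : ℤ))
      (Complex.exp (Complex.I * z * (Real.cos (θ - φ) : ℂ)) - besselJ 0 z) := by
    rw [Finset.hasSum_compl_iff]
    simpa [h0] using h'
  have he : HasSum (fun s : {s : ℤ // s ≠ 0} => f (s : ℤ))
      (Complex.exp (Complex.I * z * (Real.cos (θ - φ) : ℂ)) - besselJ 0 z) :=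
    ((Equiv.subtypeEquivRight (fun x => by simp)).hasSum_iff).mpr hsub
  have hE : errE θ φ z
      = Complex.exp (Complex.I * z * (Real.cos (θ - φ) : ℂ)) - besselJ 0 z := by
    rw [errE]
    exact he.tsum_eq
  rw [hE]
  ring

end Stmt4Aux


/-- Pointwise kernel identity underlying Theorem 3.1:
`(1/N) Σ_p Σ_{q ≠ p} e^{i k (a_p + a_q)·(r − r')}
  = N (J_0(kρ) + (1/N) Σ_n E(θ_n, φ, kρ))² − (J_0(2kρ) + (1/N) Σ_n E(θ_n, φ, 2kρ))`,
where `ρ = |r − r'|`. -/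
theorem stmt4 (N : ℕ) (hN : 1 ≤ N) (θ : Fin N → ℝ)
    (a : Fin N → EuclideanSpace ℝ (Fin 2))
    (ha : ∀ n, a n = (!₂[Real.cos (θ n), Real.sin (θ n)] : EuclideanSpace ℝ (Fin 2)))
    (k : ℂ) (r r' : EuclideanSpace ℝ (Fin 2)) (hrr : r ≠ r') (φ : ℝ)
    (hφ : r - r' = ‖r - r'‖ • (!₂[Real.cos φ, Real.sin φ] : EuclideanSpace ℝ (Fin 2))) :
    (1 / (N : ℂ)) * ∑ p : Fin N, ∑ q ∈ Finset.univ.filter (fun q => q ≠ p),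
        Complex.exp (Complex.I * k * ((⟪a p + a q, r - r'⟫ : ℝ) : ℂ)) =
      (N : ℂ) * (besselJ 0 (k * (‖r - r'‖ : ℂ)) +
          (1 / (N : ℂ)) * ∑ n : Fin N, errE (θ n) φ (k * (‖r - r'‖ : ℂ))) ^ 2 -
        (besselJ 0 (2 * k * (‖r - r'‖ : ℂ)) +
          (1 / (N : ℂ)) * ∑ n : Fin N, errE (θ n) φ (2 * k * (‖r - r'‖ : ℂ))) := by
  have hN' : (N : ℂ) ≠ 0 := Nat.cast_ne_zero.mpr (by omega)
  set ρ : ℝ := ‖r - r'‖ with hρ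
  have hinner : ∀ n, (⟪a n, r - r'⟫ : ℝ) = ρ * Real.cos (θ n - φ) := by
    intro n
    rw [ha n, hφ, real_inner_smul_right]
    congr 1
    rw [PiLp.inner_apply]
    simp only [Fin.sum_univ_two, PiLp.toLp_apply, Matrix.cons_val_zero, Matrix.cons_val_one, Matrix.head_cons,
      RCLike.inner_apply, conj_trivial]
    rw [Real.cos_sub]
    ring
  set cc : Fin N → ℂ := fun n =>
    Complex.exp (Complex.I * k * ((ρ * Real.cos (θ n - φ) : ℝ) : ℂ)) with hcc
  have hkey1 : ∀ n, besselJ 0 (k * (ρ : ℂ)) + errE (θ n) φ (k * (ρ : ℂ)) = cc n := by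
    intro n
    rw [Stmt4Aux.key (θ n) φ (k * (ρ : ℂ)), hcc]
    congr 1
    push_cast
    ring
  have hkey2 : ∀ n, besselJ 0 (2 * k * (ρ : ℂ)) + errE (θ n) φ (2 * k * (ρ : ℂ)) = cc n ^ 2 := by
    intro n
    rw [Stmt4Aux.key (θ n) φ (2 * k * (ρ : ℂ)), hcc, sq, ← Complex.exp_add]
    congr 1
    push_cast
    ring
  have hsplit : ∀ p q : Fin N,
      Complex.exp (Complex.I * k * ((⟪a p + a q, r - r'⟫ : ℝ) : ℂ)) = cc p * cc q := by
    intro p q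
    rw [hcc, ← Complex.exp_add]
    congr 1
    have : (⟪a p + a q, r - r'⟫ : ℝ) = ρ * Real.cos (θ p - φ) + ρ * Real.cos (θ q - φ) := by
      rw [inner_add_left, hinner, hinner]
    rw [this]
    push_cast
    ring
  have hL : ∑ p : Fin N, ∑ q ∈ Finset.univ.filter (fun q => q ≠ p),
        Complex.exp (Complex.I * k * ((⟪a p + a q, r - r'⟫ : ℝ) : ℂ))
      = (∑ n : Fin N, cc n) ^ 2 - ∑ n : Fin N, cc n ^ 2 := by
    have h1 : ∀ p : Fin N, ∑ q ∈ Finset.univ.filter (fun q => q ≠ p),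
        Complex.exp (Complex.I * k * ((⟪a p + a q, r - r'⟫ : ℝ) : ℂ))
        = cc p * ((∑ n : Fin N, cc n) - cc p) := by
      intro p
      rw [Finset.sum_congr rfl (fun q _ => hsplit p q), ← Finset.mul_sum]
      congr 1
      rw [Finset.filter_ne', Finset.sum_erase_eq_sub (Finset.mem_univ p)]
    rw [Finset.sum_congr rfl (fun p _ => h1 p)]
    rw [Finset.sum_congr rfl (fun p _ => mul_sub (cc p) _ _), Finset.sum_sub_distrib,
      ← Finset.sum_mul, sq]
    congr 1
    apply Finset.sum_congr rfl
    intro p _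
    rw [sq]
  have hsum1 : besselJ 0 (k * (ρ : ℂ)) + (1 / (N : ℂ)) * ∑ n : Fin N, errE (θ n) φ (k * (ρ : ℂ))
      = (1 / (N : ℂ)) * ∑ n : Fin N, cc n := by
    have : ∑ n : Fin N, cc n
        = ∑ n : Fin N, (besselJ 0 (k * (ρ : ℂ)) + errE (θ n) φ (k * (ρ : ℂ))) :=
      (Finset.sum_congr rfl (fun n _ => (hkey1 n).symm))
    rw [this, Finset.sum_add_distrib, Finset.sum_const, Finset.card_univ, Fintype.card_fin,
      nsmul_eq_mul]
    field_simp
  have hsum2 : besselJ 0 (2 * k * (ρ : ℂ))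
        + (1 / (N : ℂ)) * ∑ n : Fin N, errE (θ n) φ (2 * k * (ρ : ℂ))
      = (1 / (N : ℂ)) * ∑ n : Fin N, cc n ^ 2 := by
    have : ∑ n : Fin N, cc n ^ 2
        = ∑ n : Fin N, (besselJ 0 (2 * k * (ρ : ℂ)) + errE (θ n) φ (2 * k * (ρ : ℂ))) :=
      (Finset.sum_congr rfl (fun n _ => (hkey2 n).symm))
    rw [this, Finset.sum_add_distrib, Finset.sum_const, Finset.card_univ, Fintype.card_fin,
      nsmul_eq_mul]
    field_simp
  rw [hL, hsum1, hsum2]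
  field_simp
end

section
/- (Exact structure of the Kirchhoff-migration imaging function without diagonal data, Theorem 3.1) Let N ≥ 1, let θ_1, …, θ_N ∈ ℝ, and set a_n = (cos θ_n, sin θ_n) ∈ ℝ². Let k ∈ ℂ, let D ⊂ ℝ² be a bounded measurable set, and let O : ℝ² → ℂ be integrable and supported in D. Define the N × N complex matrix 𝔾 by 𝔾_{pq} = ∫_D O(r') e^{− i k (a_p + a_q) · r'} dr' for p ≠ q and 𝔾_{pp} = 0, and define the vector w(r) ∈ ℂ^N by w_n(r) = (1/√N) e^{i k (a_n · r)}. Then for every r ∈ ℝ² with r ∉ closure(D), w(r)ᵀ 𝔾 w(r) = ∫_D O(r') [ N ( J_0(k |r − r'|) + (1/N) Σ_{n=1}^{N} E(θ_n, φ(r,r'), k |r − r'|) )² − ( J_0(2 k |r − r'|) + (1/N) Σ_{n=1}^{N} E(θ_n, φ(r,r'), 2 k |r − r'|) ) ] dr', where φ(r, r') ∈ ℝ is any angle with r − r' = |r − r'| (cos φ(r,r'), sin φ(r,r')), and the integrand on the right-hand side is integrable over D. -/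
open scoped RealInnerProductSpace

open Complex MeasureTheory intervalIntegral Real

namespace JA

noncomputable def f (z : ℂ) (τ : ℝ) : ℂ := Complex.exp (Complex.I * z * (Real.sin τ : ℂ))

noncomputable def f1 (z : ℂ) (τ : ℝ) : ℂ := Complex.I * z * (Real.cos τ : ℂ) * f z τ

noncomputable def f2 (z : ℂ) (τ : ℝ) : ℂ :=
  Complex.I * z * (-(Real.sin τ : ℂ)) * f z τ
    + Complex.I * z * (Real.cos τ : ℂ) * (Complex.I * z * (Real.cos τ : ℂ) * f z τ)

lemma f_periodic (z : ℂ) : Function.Periodic (f z) (2 * Real.pi) := by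
  intro τ; simp [f, Real.sin_add_two_pi]

lemma hasDerivAt_inner (z : ℂ) (τ : ℝ) :
    HasDerivAt (fun τ : ℝ => Complex.I * z * (Real.sin τ : ℂ))
      (Complex.I * z * (Real.cos τ : ℂ)) τ := by
  simpa using ((Real.hasDerivAt_sin τ).ofReal_comp).const_mul (Complex.I * z)

lemma hasDerivAt_f (z : ℂ) (τ : ℝ) : HasDerivAt (f z) (f1 z τ) τ := by
  have := (hasDerivAt_inner z τ).cexp
  unfold f1 f
  convert this using 1
  ring

lemma hasDerivAt_cos' (z : ℂ) (τ : ℝ) :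
    HasDerivAt (fun τ : ℝ => Complex.I * z * (Real.cos τ : ℂ))
      (Complex.I * z * (-(Real.sin τ : ℂ))) τ := by
  simpa using ((Real.hasDerivAt_cos τ).ofReal_comp).const_mul (Complex.I * z)

lemma hasDerivAt_f1 (z : ℂ) (τ : ℝ) : HasDerivAt (f1 z) (f2 z τ) τ :=
  (hasDerivAt_cos' z τ).mul (hasDerivAt_f z τ)

lemma continuous_f (z : ℂ) : Continuous (f z) := by
  unfold f; fun_prop

lemma continuous_f1 (z : ℂ) : Continuous (f1 z) := by
  unfold f1 f; fun_prop

lemma continuous_f2 (z : ℂ) : Continuous (f2 z) := by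
  unfold f2 f; fun_prop

lemma norm_f_le (z : ℂ) (τ : ℝ) : ‖f z τ‖ ≤ Real.exp ‖z‖ := by
  rw [f, Complex.norm_exp, Real.exp_le_exp]
  calc (Complex.I * z * (Real.sin τ : ℂ)).re ≤ ‖Complex.I * z * (Real.sin τ : ℂ)‖ :=
        Complex.re_le_norm _
    _ = ‖z‖ * |Real.sin τ| := by
        rw [norm_mul, norm_mul, Complex.norm_I, one_mul, Complex.norm_real, Real.norm_eq_abs]
    _ ≤ ‖z‖ * 1 := by nlinarith [norm_nonneg z, Real.abs_sin_le_one τ]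
    _ = ‖z‖ := mul_one _

lemma norm_f2_le (z : ℂ) (τ : ℝ) :
    ‖f2 z τ‖ ≤ (‖z‖ + ‖z‖ ^ 2) * Real.exp ‖z‖ := by
  have hs : ‖Complex.I * z * (-(Real.sin τ : ℂ))‖ ≤ ‖z‖ := by
    rw [norm_mul, norm_mul, Complex.norm_I, one_mul, norm_neg, Complex.norm_real,
      Real.norm_eq_abs]
    nlinarith [Real.abs_sin_le_one τ, norm_nonneg z]
  have hc : ‖Complex.I * z * (Real.cos τ : ℂ)‖ ≤ ‖z‖ := by
    rw [norm_mul, norm_mul, Complex.norm_I, one_mul, Complex.norm_real, Real.norm_eq_abs]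
    nlinarith [Real.abs_cos_le_one τ, norm_nonneg z]
  have hf := norm_f_le z τ
  have hz := norm_nonneg z
  have he : (0:ℝ) ≤ Real.exp ‖z‖ := (Real.exp_pos _).le
  have h1 : ‖Complex.I * z * (-(Real.sin τ : ℂ)) * f z τ‖ ≤ ‖z‖ * Real.exp ‖z‖ := by
    rw [norm_mul]
    exact mul_le_mul hs hf (norm_nonneg _) hz
  have h2 : ‖Complex.I * z * (Real.cos τ : ℂ) * (Complex.I * z * (Real.cos τ : ℂ) * f z τ)‖
      ≤ ‖z‖ ^ 2 * Real.exp ‖z‖ := by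
    have hfn := norm_nonneg (f z τ)
    calc ‖Complex.I * z * (Real.cos τ : ℂ) * (Complex.I * z * (Real.cos τ : ℂ) * f z τ)‖
        = ‖Complex.I * z * (Real.cos τ : ℂ)‖ * ‖Complex.I * z * (Real.cos τ : ℂ) * f z τ‖ :=
          norm_mul _ _
      _ = ‖Complex.I * z * (Real.cos τ : ℂ)‖ * (‖Complex.I * z * (Real.cos τ : ℂ)‖ * ‖f z τ‖) := by
          rw [norm_mul (Complex.I * z * (Real.cos τ : ℂ)) (f z τ)]
      _ ≤ ‖z‖ * (‖z‖ * Real.exp ‖z‖) :=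
          mul_le_mul hc (mul_le_mul hc hf hfn hz) (by positivity) hz
      _ = ‖z‖ ^ 2 * Real.exp ‖z‖ := by ring
  calc ‖f2 z τ‖ ≤ _ + _ := norm_add_le _ _
    _ ≤ ‖z‖ * Real.exp ‖z‖ + ‖z‖ ^ 2 * Real.exp ‖z‖ := add_le_add h1 h2
    _ = (‖z‖ + ‖z‖ ^ 2) * Real.exp ‖z‖ := by ring

end JA

namespace JA

noncomputable def v (n : ℤ) (τ : ℝ) : ℂ := Complex.exp (-(Complex.I * (n : ℂ)) * (τ : ℝ))

lemma hasDerivAt_v (n : ℤ) (τ : ℝ) :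
    HasDerivAt (v n) (-(Complex.I * (n : ℂ)) * v n τ) τ := by
  have h := (((hasDerivAt_id τ).ofReal_comp).const_mul (-(Complex.I * (n : ℂ)))).cexp
  unfold v
  convert h using 1
  simp only [id_eq, Complex.ofReal_one]
  simp
  ring

lemma continuous_v (n : ℤ) : Continuous (v n) := by unfold v; fun_prop

lemma norm_v (n : ℤ) (τ : ℝ) : ‖v n τ‖ = 1 := by
  rw [v, Complex.norm_exp]
  simp

lemma v_end (n : ℤ) : v n Real.pi = v n (-Real.pi) := by
  have h1 : v n Real.pi = ((-1 : ℂ)) ^ (-n) := by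
    rw [v]
    have : -(Complex.I * (n : ℂ)) * (Real.pi : ℝ) = (-n : ℤ) * ((Real.pi : ℂ) * Complex.I) := by
      push_cast; ring
    rw [this, Complex.exp_int_mul, Complex.exp_pi_mul_I]
  have h2 : v n (-Real.pi) = ((-1 : ℂ)) ^ n := by
    rw [v]
    have : -(Complex.I * (n : ℂ)) * ((-Real.pi : ℝ) : ℂ) = (n : ℤ) * ((Real.pi : ℂ) * Complex.I) := by
      push_cast; ring
    rw [this, Complex.exp_int_mul, Complex.exp_pi_mul_I]
  rw [h1, h2, zpow_neg, ← inv_zpow, inv_neg, inv_one]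

lemma ibp (n : ℤ) (hn : n ≠ 0) (u u' : ℝ → ℂ) (hu : ∀ τ, HasDerivAt u (u' τ) τ)
    (hu' : Continuous u') (hend : u Real.pi = u (-Real.pi)) :
    ∫ τ in (-Real.pi)..Real.pi, u τ * v n τ =
      (Complex.I * (n : ℂ))⁻¹ * ∫ τ in (-Real.pi)..Real.pi, u' τ * v n τ := by
  have hcu : Continuous u :=
    continuous_iff_continuousAt.mpr fun τ => (hu τ).continuousAt
  have hInz : (Complex.I * (n : ℂ)) ≠ 0 := by
    simp [Complex.I_ne_zero, Complex.ext_iff]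
    exact_mod_cast hn
  have hvder : ∀ τ ∈ Set.uIcc (-Real.pi) Real.pi,
      HasDerivAt (v n) (-(Complex.I * (n : ℂ)) * v n τ) τ := fun τ _ => hasDerivAt_v n τ
  have huder : ∀ τ ∈ Set.uIcc (-Real.pi) Real.pi, HasDerivAt u (u' τ) τ := fun τ _ => hu τ
  have hu'int : IntervalIntegrable u' MeasureTheory.volume (-Real.pi) Real.pi :=
    hu'.intervalIntegrable _ _
  have hv'int : IntervalIntegrable (fun τ => -(Complex.I * (n : ℂ)) * v n τ)
      MeasureTheory.volume (-Real.pi) Real.pi :=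
    (Continuous.intervalIntegrable (by have := continuous_v n; fun_prop) _ _)
  have key := intervalIntegral.integral_deriv_mul_eq_sub huder hvder hu'int hv'int
  rw [hend, v_end n, sub_self] at key
  have hsplit : (∫ τ in (-Real.pi)..Real.pi, (u' τ * v n τ + u τ * (-(Complex.I * (n : ℂ)) * v n τ)))
      = (∫ τ in (-Real.pi)..Real.pi, u' τ * v n τ)
        + ∫ τ in (-Real.pi)..Real.pi, u τ * (-(Complex.I * (n : ℂ)) * v n τ) := by
    apply intervalIntegral.integral_add
    · exact (hu'.mul (continuous_v n)).intervalIntegrable _ _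
    · exact (hcu.mul (by have := continuous_v n; fun_prop)).intervalIntegrable _ _
  rw [hsplit] at key
  have h2 : (∫ τ in (-Real.pi)..Real.pi, u τ * (-(Complex.I * (n : ℂ)) * v n τ))
      = -(Complex.I * (n : ℂ)) * ∫ τ in (-Real.pi)..Real.pi, u τ * v n τ := by
    rw [← intervalIntegral.integral_const_mul]
    congr 1; ext τ; ring
  rw [h2] at key
  field_simp
  linear_combination (-1 : ℂ) * key

end JA

namespace JA

lemma besselJ_eq (n : ℤ) (z : ℂ) :
    besselJ n z = (1 / (2 * (Real.pi : ℂ))) *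
      ∫ τ in (-Real.pi)..Real.pi, f z τ * v n τ := by
  unfold besselJ
  congr 1
  apply intervalIntegral.integral_congr
  intro τ _
  simp only [f, v, ← Complex.exp_add]
  congr 1
  push_cast
  ring

lemma besselJ_bound (z : ℂ) (n : ℤ) (hn : n ≠ 0) :
    ‖besselJ n z‖ ≤ (‖z‖ + ‖z‖ ^ 2) * Real.exp ‖z‖ / (n : ℝ) ^ 2 := by
  set M := (‖z‖ + ‖z‖ ^ 2) * Real.exp ‖z‖ with hM
  have hM0 : 0 ≤ M := by positivity
  have hend1 : f z Real.pi = f z (-Real.pi) := by simp [f]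
  have hend2 : f1 z Real.pi = f1 z (-Real.pi) := by simp [f1, f]
  have h1 := ibp n hn (f z) (f1 z) (hasDerivAt_f z) (continuous_f1 z) hend1
  have h2 := ibp n hn (f1 z) (f2 z) (hasDerivAt_f1 z) (continuous_f2 z) hend2
  have habs : |Real.pi - -Real.pi| = 2 * Real.pi := by
    rw [sub_neg_eq_add, abs_of_pos (by positivity)]
    ring
  have hint : ‖∫ τ in (-Real.pi)..Real.pi, f2 z τ * v n τ‖ ≤ M * (2 * Real.pi) := by
    rw [← habs]
    apply intervalIntegral.norm_integral_le_of_norm_le_const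
    intro τ _
    rw [norm_mul, norm_v, mul_one]
    exact norm_f2_le z τ
  have hncast : ((n : ℂ)) = (((n : ℝ)) : ℂ) := by push_cast; rfl
  have hnormInv : ‖(Complex.I * (n : ℂ))⁻¹‖ = |(n : ℝ)|⁻¹ := by
    rw [norm_inv, norm_mul, Complex.norm_I, one_mul, hncast, Complex.norm_real,
      Real.norm_eq_abs]
  have hA : ‖(1 / (2 * (Real.pi : ℂ)))‖ = 1 / (2 * Real.pi) := by
    have : (2 * (Real.pi : ℂ)) = (((2 * Real.pi : ℝ)) : ℂ) := by push_cast; ring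
    rw [norm_div, norm_one, this, Complex.norm_real, Real.norm_eq_abs,
      abs_of_pos (by positivity)]
  have hnpos : 0 < |(n : ℝ)| := abs_pos.mpr (by exact_mod_cast hn)
  rw [besselJ_eq, h1, h2, norm_mul, norm_mul, norm_mul, hA, hnormInv]
  calc 1 / (2 * Real.pi) * (|(n : ℝ)|⁻¹ * (|(n : ℝ)|⁻¹ *
        ‖∫ τ in (-Real.pi)..Real.pi, f2 z τ * v n τ‖))
      ≤ 1 / (2 * Real.pi) * (|(n : ℝ)|⁻¹ * (|(n : ℝ)|⁻¹ * (M * (2 * Real.pi)))) := by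
        gcongr
    _ = M / (n : ℝ) ^ 2 := by
        have hsq : ((n : ℝ)) ^ 2 = |(n : ℝ)| * |(n : ℝ)| := by
          rw [← _root_.sq_abs ((n : ℝ)), sq]
        rw [hsq]
        field_simp

end JA

namespace JA

instance : Fact (0 < 2 * Real.pi) := ⟨by positivity⟩

noncomputable def g (z : ℂ) : C(AddCircle (2 * Real.pi), ℂ) :=
  ⟨(f_periodic z).lift, by
    have h : Continuous (f z) := continuous_f z
    exact h.quotient_liftOn' _⟩

lemma g_coe (z : ℂ) (x : ℝ) : g z ((x : ℝ) : AddCircle (2 * Real.pi)) = f z x :=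
  (f_periodic z).lift_coe x

lemma fourierCoeff_g (z : ℂ) (n : ℤ) :
    fourierCoeff (⇑(g z)) n = besselJ n z := by
  rw [fourierCoeff_eq_intervalIntegral _ n (-Real.pi), besselJ_eq]
  have hπ : Real.pi ≠ 0 := Real.pi_ne_zero
  have h1 : -Real.pi + 2 * Real.pi = Real.pi := by ring
  rw [h1]
  have h2 : ((1 : ℝ) / (2 * Real.pi)) • (∫ x in (-Real.pi)..Real.pi,
      (fourier (-n) ((x : ℝ) : AddCircle (2 * Real.pi)) : ℂ) • g z ((x : ℝ) : AddCircle (2 * Real.pi)))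
      = (((1 : ℝ) / (2 * Real.pi) : ℝ) : ℂ) * ∫ x in (-Real.pi)..Real.pi,
        (fourier (-n) ((x : ℝ) : AddCircle (2 * Real.pi)) : ℂ) * g z ((x : ℝ) : AddCircle (2 * Real.pi)) := by
    rw [Complex.real_smul]
    congr 1
  rw [h2]
  have h3 : (((1 : ℝ) / (2 * Real.pi) : ℝ) : ℂ) = 1 / (2 * (Real.pi : ℂ)) := by push_cast; ring
  rw [h3]
  congr 1
  apply intervalIntegral.integral_congr
  intro x _
  dsimp only
  rw [g_coe, fourier_coe_apply]
  rw [mul_comm]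
  congr 1
  unfold v
  congr 1
  have hπc : (Real.pi : ℂ) ≠ 0 := Complex.ofReal_ne_zero.mpr Real.pi_ne_zero
  push_cast
  field_simp

lemma summable_bessel (z : ℂ) : Summable fun n : ℤ => fourierCoeff (⇑(g z)) n := by
  apply Summable.of_norm_bounded_eventually
    (g := fun n : ℤ => ((‖z‖ + ‖z‖ ^ 2) * Real.exp ‖z‖) * (1 / (n : ℝ) ^ 2))
  · exact (Real.summable_one_div_int_pow.mpr one_lt_two).mul_left _
  · filter_upwards [Filter.eventually_cofinite_ne (0 : ℤ)] with n hn
    rw [fourierCoeff_g]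
    calc ‖besselJ n z‖ ≤ (‖z‖ + ‖z‖ ^ 2) * Real.exp ‖z‖ / (n : ℝ) ^ 2 := besselJ_bound z n hn
      _ = (‖z‖ + ‖z‖ ^ 2) * Real.exp ‖z‖ * (1 / (n : ℝ) ^ 2) := by ring

lemma hasSum_jacobiAnger (z : ℂ) (β : ℝ) :
    HasSum (fun n : ℤ => Complex.I ^ n * besselJ n z * Complex.exp (Complex.I * (n : ℂ) * (β : ℂ)))
      (Complex.exp (Complex.I * z * (Real.cos β : ℂ))) := by
  have h := has_pointwise_sum_fourier_series_of_summable (summable_bessel z)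
    (((β + Real.pi / 2 : ℝ) : AddCircle (2 * Real.pi)))
  have hI : Complex.I = Complex.exp (((Real.pi : ℂ) / 2) * Complex.I) := by
    rw [Complex.exp_mul_I]
    have : ((Real.pi : ℂ) / 2) = ((Real.pi / 2 : ℝ) : ℂ) := by push_cast; ring
    rw [this, ← Complex.ofReal_cos, ← Complex.ofReal_sin, Real.cos_pi_div_two,
      Real.sin_pi_div_two]
    simp
  have hterm : (fun n : ℤ => fourierCoeff (⇑(g z)) n • (fourier n
        (((β + Real.pi / 2 : ℝ) : AddCircle (2 * Real.pi))) : ℂ))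
      = fun n : ℤ => Complex.I ^ n * besselJ n z * Complex.exp (Complex.I * (n : ℂ) * (β : ℂ)) := by
    funext n
    rw [fourierCoeff_g, smul_eq_mul, fourier_coe_apply]
    have e1 : Complex.exp (2 * (Real.pi : ℂ) * Complex.I * (n : ℂ) *
          (((β + Real.pi / 2 : ℝ)) : ℂ) / (((2 * Real.pi : ℝ)) : ℂ))
        = Complex.I ^ n * Complex.exp (Complex.I * (n : ℂ) * (β : ℂ)) := by
      have hπ : (Real.pi : ℂ) ≠ 0 := Complex.ofReal_ne_zero.mpr Real.pi_ne_zero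
      have harg : 2 * (Real.pi : ℂ) * Complex.I * (n : ℂ) *
            (((β + Real.pi / 2 : ℝ)) : ℂ) / (((2 * Real.pi : ℝ)) : ℂ)
          = (n : ℂ) * (((Real.pi : ℂ) / 2) * Complex.I) + Complex.I * (n : ℂ) * (β : ℂ) := by
        push_cast
        field_simp
        ring
      rw [harg, Complex.exp_add, Complex.exp_int_mul, ← hI]
    rw [e1]
    ring
  have hval : g z (((β + Real.pi / 2 : ℝ) : AddCircle (2 * Real.pi)))
      = Complex.exp (Complex.I * z * (Real.cos β : ℂ)) := by
    rw [g_coe]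
    unfold f
    rw [Real.sin_add_pi_div_two]
  rw [hterm, hval] at h
  exact h

end JA

namespace JA

lemma errE_eq (θ φ : ℝ) (z : ℂ) :
    errE θ φ z = Complex.exp (Complex.I * z * (Real.cos (θ - φ) : ℂ)) - besselJ 0 z := by
  set F : ℤ → ℂ := fun n => Complex.I ^ n * besselJ n z *
    Complex.exp (Complex.I * (n : ℂ) * ((θ : ℂ) - (φ : ℂ))) with hFdef
  have hF : HasSum F (Complex.exp (Complex.I * z * (Real.cos (θ - φ) : ℂ))) := by
    have h := hasSum_jacobiAnger z (θ - φ)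
    have : (fun n : ℤ => Complex.I ^ n * besselJ n z *
        Complex.exp (Complex.I * (n : ℂ) * (((θ - φ : ℝ)) : ℂ))) = F := by
      funext n
      rw [hFdef]
      push_cast
      ring_nf
    rwa [this] at h
  have hFs := hF.summable
  have h0 : F 0 = besselJ 0 z := by simp [hFdef]
  have hsub : (∑' s : {s : ℤ // s ≠ 0}, F (s : ℤ)) = ∑' n : ℤ, if n = 0 then 0 else F n := by
    have h1 := tsum_subtype {s : ℤ | s ≠ 0} F
    rw [show (∑' s : {s : ℤ // s ≠ 0}, F (s : ℤ)) = ∑' x : ↥{s : ℤ | s ≠ 0}, F ↑x from rfl, h1]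
    apply tsum_congr
    intro n
    rw [Set.indicator_apply]
    simp only [Set.mem_setOf_eq]
    rw [ite_not]
  have hmain := Summable.tsum_eq_add_tsum_ite hFs 0
  have : errE θ φ z = ∑' s : {s : ℤ // s ≠ 0}, F (s : ℤ) := rfl
  rw [this, hsub]
  rw [hF.tsum_eq] at hmain
  rw [← h0]
  rw [hmain]
  ring

end JA

/-- Exact structure of the Kirchhoff-migration imaging function without diagonal data:
`w(r)ᵀ 𝔾 w(r) = ∫_D O(r') [N (J_0(k|r−r'|) + (1/N) Σ_n E(θ_n, φ(r'), k|r−r'|))²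
  − (J_0(2k|r−r'|) + (1/N) Σ_n E(θ_n, φ(r'), 2k|r−r'|))] dr'`,
the integrand being integrable on `D`. -/
theorem stmt5 (N : ℕ) (hN : 1 ≤ N) (θ : Fin N → ℝ)
    (a : Fin N → EuclideanSpace ℝ (Fin 2))
    (ha : ∀ n, a n = (WithLp.toLp 2 ![Real.cos (θ n), Real.sin (θ n)] : EuclideanSpace ℝ (Fin 2)))
    (k : ℂ)
    (D : Set (EuclideanSpace ℝ (Fin 2))) (hD : MeasurableSet D)
    (hDbdd : Bornology.IsBounded D)
    (O : EuclideanSpace ℝ (Fin 2) → ℂ) (hO : MeasureTheory.Integrable O)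
    (hOsupp : ∀ x, x ∉ D → O x = 0)
    (G : Matrix (Fin N) (Fin N) ℂ)
    (hG : ∀ p q : Fin N, G p q = if p = q then 0 else
      ∫ r' in D, O r' * Complex.exp (-(Complex.I * k * ((⟪a p + a q, r'⟫ : ℝ) : ℂ))))
    (w : EuclideanSpace ℝ (Fin 2) → Fin N → ℂ)
    (hw : ∀ r n, w r n = (1 / ((Real.sqrt N : ℝ) : ℂ)) *
      Complex.exp (Complex.I * k * ((⟪a n, r⟫ : ℝ) : ℂ)))
    (r : EuclideanSpace ℝ (Fin 2)) (hr : r ∉ closure D)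
    (φ : EuclideanSpace ℝ (Fin 2) → ℝ)
    (hφ : ∀ r' ∈ D, r - r' =
      ‖r - r'‖ • (WithLp.toLp 2 ![Real.cos (φ r'), Real.sin (φ r')] : EuclideanSpace ℝ (Fin 2))) :
    ((∑ p : Fin N, ∑ q : Fin N, w r p * G p q * w r q) =
      ∫ r' in D, O r' *
        ((N : ℂ) * (besselJ 0 (k * (‖r - r'‖ : ℂ)) +
            (1 / (N : ℂ)) * ∑ n : Fin N, errE (θ n) (φ r') (k * (‖r - r'‖ : ℂ))) ^ 2 -
          (besselJ 0 (2 * k * (‖r - r'‖ : ℂ)) +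
            (1 / (N : ℂ)) * ∑ n : Fin N, errE (θ n) (φ r') (2 * k * (‖r - r'‖ : ℂ))))) ∧
    MeasureTheory.IntegrableOn (fun r' => O r' *
        ((N : ℂ) * (besselJ 0 (k * (‖r - r'‖ : ℂ)) +
            (1 / (N : ℂ)) * ∑ n : Fin N, errE (θ n) (φ r') (k * (‖r - r'‖ : ℂ))) ^ 2 -
          (besselJ 0 (2 * k * (‖r - r'‖ : ℂ)) +
            (1 / (N : ℂ)) * ∑ n : Fin N, errE (θ n) (φ r') (2 * k * (‖r - r'‖ : ℂ))))) D := by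

  classical
  have hNR : (0 : ℝ) < N := by exact_mod_cast hN
  have hNne : (N : ℂ) ≠ 0 := Nat.cast_ne_zero.mpr (by omega)
  -- the plane-wave factors
  set e : Fin N → EuclideanSpace ℝ (Fin 2) → ℂ :=
    fun n r' => Complex.exp (Complex.I * k * ((⟪a n, r - r'⟫ : ℝ) : ℂ)) with he
  have hcont_e : ∀ n, Continuous (e n) := by
    intro n
    apply Complex.continuous_exp.comp
    apply Continuous.mul continuous_const
    apply Complex.continuous_ofReal.comp
    exact Continuous.inner continuous_const (continuous_const.sub continuous_id)
  -- auxiliary integrability: O times any continuous function is integrable on D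
  have hIntAux : ∀ (F : EuclideanSpace ℝ (Fin 2) → ℂ), Continuous F →
      MeasureTheory.IntegrableOn (fun r' => O r' * F r') D := by
    intro F hF
    have hcomp : IsCompact (closure D) := hDbdd.isCompact_closure
    obtain ⟨C, hC⟩ := hcomp.exists_bound_of_continuousOn hF.continuousOn
    have hOD : MeasureTheory.IntegrableOn O D := hO.integrableOn
    have h1 : MeasureTheory.IntegrableOn (fun r' => F r' * O r') D := by
      apply MeasureTheory.Integrable.bdd_mul hOD
        (hF.aestronglyMeasurable.restrict)
      apply (MeasureTheory.ae_restrict_iff' hD).mpr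
      exact MeasureTheory.ae_of_all _ fun x hx => hC x (subset_closure hx)
    exact h1.congr_fun (fun x _ => mul_comm _ _) hD
  -- inner products in terms of angles
  have hip : ∀ (n : Fin N), ∀ r' ∈ D,
      (⟪a n, r - r'⟫ : ℝ) = ‖r - r'‖ * Real.cos (θ n - φ r') := by
    intro n r' hr'
    have hv := hφ r' hr'
    conv_lhs => rw [hv]
    rw [real_inner_smul_right, ha n, Real.cos_sub]
    congr 1
    simp [PiLp.inner_apply, Fin.sum_univ_two]
    ring
  -- Jacobi–Anger link
  have hJA1 : ∀ (n : Fin N), ∀ r' ∈ D,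
      besselJ 0 (k * (‖r - r'‖ : ℂ)) + errE (θ n) (φ r') (k * (‖r - r'‖ : ℂ)) = e n r' := by
    intro n r' hr'
    rw [JA.errE_eq]
    have : Complex.exp (Complex.I * (k * (‖r - r'‖ : ℝ)) * ((Real.cos (θ n - φ r') : ℝ) : ℂ))
        = e n r' := by
      rw [he]
      congr 1
      rw [hip n r' hr']
      push_cast
      ring
    rw [← this]
    ring
  have hJA2 : ∀ (n : Fin N), ∀ r' ∈ D,
      besselJ 0 (2 * k * (‖r - r'‖ : ℂ)) + errE (θ n) (φ r') (2 * k * (‖r - r'‖ : ℂ))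
        = e n r' ^ 2 := by
    intro n r' hr'
    rw [JA.errE_eq]
    have : Complex.exp (Complex.I * (2 * k * (‖r - r'‖ : ℝ)) * ((Real.cos (θ n - φ r') : ℝ) : ℂ))
        = e n r' ^ 2 := by
      rw [he, sq, ← Complex.exp_add]
      congr 1
      rw [hip n r' hr']
      push_cast
      ring
    rw [← this]
    ring
  -- the double-sum integrand
  set g2 : Fin N → Fin N → EuclideanSpace ℝ (Fin 2) → ℂ :=
    fun p q r' => if p = q then 0 else (1 / (N : ℂ)) * (O r' * (e p r' * e q r')) with hg2
  have hg2int : ∀ p q : Fin N, MeasureTheory.IntegrableOn (g2 p q) D := by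
    intro p q
    by_cases h : p = q
    · simp only [hg2, h, if_pos rfl]
      exact MeasureTheory.integrable_zero _ _ _
    · simp only [hg2, if_neg h]
      have := (hIntAux (fun r' => e p r' * e q r') ((hcont_e p).mul (hcont_e q))).const_mul
        (1 / (N : ℂ))
      exact this
  -- each matrix entry as a set integral
  have hsqrt : ((Real.sqrt N : ℝ) : ℂ) * ((Real.sqrt N : ℝ) : ℂ) = (N : ℂ) := by
    rw [← Complex.ofReal_mul, Real.mul_self_sqrt (le_of_lt hNR)]
    push_cast
    rfl
  have hterm : ∀ p q : Fin N, w r p * G p q * w r q = ∫ r' in D, g2 p q r' := by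
    intro p q
    by_cases h : p = q
    · rw [hG p q, if_pos h]
      simp only [hg2, if_pos h]
      simp
    · rw [hG p q, if_neg h, hw r p, hw r q]
      simp only [hg2, if_neg h]
      rw [show ∀ (A B C : ℂ), (1 / ((Real.sqrt N : ℝ) : ℂ)) * A * B * ((1 / ((Real.sqrt N : ℝ) : ℂ)) * C)
        = ((1 / (N : ℂ)) * (A * C)) * B from ?_]
      · rw [← MeasureTheory.integral_const_mul]
        apply MeasureTheory.setIntegral_congr_fun hD
        intro r' _
        simp only
        rw [he]
        simp only
        rw [inner_add_left]
        have h1 : (⟪a p, r - r'⟫ : ℝ) = ⟪a p, r⟫ - ⟪a p, r'⟫ := inner_sub_right _ _ _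
        have h2 : (⟪a q, r - r'⟫ : ℝ) = ⟪a q, r⟫ - ⟪a q, r'⟫ := inner_sub_right _ _ _
        rw [h1, h2]
        have hmerge : Complex.exp (Complex.I * k * (((⟪a p, r⟫ : ℝ) : ℂ) - ((⟪a p, r'⟫ : ℝ) : ℂ)))
              * Complex.exp (Complex.I * k * (((⟪a q, r⟫ : ℝ) : ℂ) - ((⟪a q, r'⟫ : ℝ) : ℂ)))
            = Complex.exp (Complex.I * k * ((⟪a p, r⟫ : ℝ) : ℂ))
              * Complex.exp (Complex.I * k * ((⟪a q, r⟫ : ℝ) : ℂ))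
              * Complex.exp (-(Complex.I * k * (((⟪a p, r'⟫ : ℝ) : ℂ) + ((⟪a q, r'⟫ : ℝ) : ℂ)))) := by
          rw [← Complex.exp_add, ← Complex.exp_add, ← Complex.exp_add]
          congr 1
          ring
        push_cast
        rw [hmerge]
        ring
      · intro A B C
        have h0 : ((Real.sqrt N : ℝ) : ℂ) ≠ 0 := by
          have : Real.sqrt N ≠ 0 := (Real.sqrt_pos.mpr hNR).ne'
          exact_mod_cast this
        rw [← hsqrt]
        field_simp
  -- sum of the double-sum integrand
  have hkey : ∀ (x : Fin N → ℂ),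
      ∑ p : Fin N, ∑ q : Fin N, (if p = q then (0 : ℂ) else x p * x q)
        = (∑ p : Fin N, x p) ^ 2 - ∑ p : Fin N, x p ^ 2 := by
    intro x
    have hrow : ∀ p : Fin N, ∑ q : Fin N, (if p = q then (0 : ℂ) else x p * x q)
        = x p * (∑ q : Fin N, x q) - x p ^ 2 := by
      intro p
      calc ∑ q : Fin N, (if p = q then (0 : ℂ) else x p * x q)
          = ∑ q : Fin N, (x p * x q - if p = q then x p * x q else 0) := by
            apply Finset.sum_congr rfl
            intro q _
            by_cases hpq : p = q <;> simp [hpq]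
        _ = (∑ q : Fin N, x p * x q) - ∑ q : Fin N, (if p = q then x p * x q else 0) :=
            Finset.sum_sub_distrib _ _
        _ = x p * (∑ q : Fin N, x q) - x p ^ 2 := by
            rw [← Finset.mul_sum, Finset.sum_ite_eq]
            simp [sq]
    rw [Finset.sum_congr rfl fun p _ => hrow p, Finset.sum_sub_distrib, ← Finset.sum_mul, sq]
  -- pointwise identity on D
  have hpoint : ∀ r' ∈ D,
      (∑ p : Fin N, ∑ q : Fin N, g2 p q r') = O r' *
        ((N : ℂ) * (besselJ 0 (k * (‖r - r'‖ : ℂ)) +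
            (1 / (N : ℂ)) * ∑ n : Fin N, errE (θ n) (φ r') (k * (‖r - r'‖ : ℂ))) ^ 2 -
          (besselJ 0 (2 * k * (‖r - r'‖ : ℂ)) +
            (1 / (N : ℂ)) * ∑ n : Fin N, errE (θ n) (φ r') (2 * k * (‖r - r'‖ : ℂ)))) := by
    intro r' hr'
    have hS1 : besselJ 0 (k * (‖r - r'‖ : ℂ)) +
        (1 / (N : ℂ)) * ∑ n : Fin N, errE (θ n) (φ r') (k * (‖r - r'‖ : ℂ))
        = (1 / (N : ℂ)) * ∑ n : Fin N, e n r' := by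
      have : ∑ n : Fin N, e n r' = ∑ n : Fin N, (besselJ 0 (k * (‖r - r'‖ : ℂ)) +
          errE (θ n) (φ r') (k * (‖r - r'‖ : ℂ))) :=
        (Finset.sum_congr rfl fun n _ => (hJA1 n r' hr').symm)
      rw [this, Finset.sum_add_distrib, Finset.sum_const, Finset.card_univ, Fintype.card_fin]
      rw [mul_add, nsmul_eq_mul]
      rw [← mul_assoc, one_div, inv_mul_cancel₀ hNne, one_mul]
    have hS2 : besselJ 0 (2 * k * (‖r - r'‖ : ℂ)) +
        (1 / (N : ℂ)) * ∑ n : Fin N, errE (θ n) (φ r') (2 * k * (‖r - r'‖ : ℂ))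
        = (1 / (N : ℂ)) * ∑ n : Fin N, e n r' ^ 2 := by
      have : ∑ n : Fin N, e n r' ^ 2 = ∑ n : Fin N, (besselJ 0 (2 * k * (‖r - r'‖ : ℂ)) +
          errE (θ n) (φ r') (2 * k * (‖r - r'‖ : ℂ))) :=
        (Finset.sum_congr rfl fun n _ => (hJA2 n r' hr').symm)
      rw [this, Finset.sum_add_distrib, Finset.sum_const, Finset.card_univ, Fintype.card_fin]
      rw [mul_add, nsmul_eq_mul]
      rw [← mul_assoc, one_div, inv_mul_cancel₀ hNne, one_mul]
    have hgg : (∑ p : Fin N, ∑ q : Fin N, g2 p q r')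
        = (1 / (N : ℂ)) * O r' * ((∑ n : Fin N, e n r') ^ 2 - ∑ n : Fin N, e n r' ^ 2) := by
      have : ∀ p q : Fin N, g2 p q r'
          = ((1 / (N : ℂ)) * O r') * (if p = q then (0 : ℂ) else e p r' * e q r') := by
        intro p q
        by_cases hpq : p = q <;> simp [hg2, hpq] <;> ring
      simp_rw [this, ← Finset.mul_sum]
      rw [hkey fun n => e n r']
    rw [hgg, hS1, hS2]
    field_simp
  constructor
  · calc (∑ p : Fin N, ∑ q : Fin N, w r p * G p q * w r q)
        = ∑ p : Fin N, ∑ q : Fin N, ∫ r' in D, g2 p q r' := by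
          exact Finset.sum_congr rfl fun p _ => Finset.sum_congr rfl fun q _ => hterm p q
      _ = ∫ r' in D, ∑ p : Fin N, ∑ q : Fin N, g2 p q r' := by
          rw [MeasureTheory.integral_finset_sum _ fun p _ =>
            MeasureTheory.integrable_finset_sum _ fun q _ => hg2int p q]
          apply Finset.sum_congr rfl
          intro p _
          rw [MeasureTheory.integral_finset_sum _ fun q _ => hg2int p q]
      _ = _ := MeasureTheory.setIntegral_congr_fun hD fun r' hr' => hpoint r' hr'
  · have : MeasureTheory.IntegrableOn (fun r' => ∑ p : Fin N, ∑ q : Fin N, g2 p q r') D :=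
      MeasureTheory.integrable_finset_sum _ fun p _ =>
        MeasureTheory.integrable_finset_sum _ fun q _ => hg2int p q
    exact this.congr_fun (fun r' hr' => hpoint r' hr') hD
end
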